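/- arXiv:0705.4110 — 4 statements merged into one kernel-verified Lean document; each statement's English description precedes it below -/
import Mathlib

section
/- Fix k ∈ ℕ with k ≥ 1 and 0 < m < k. The function g(λ) = (∑_{i=0}^k i·λ^i) / (∑_{i=0}^k λ^i), defined for λ > 0, is strictly increasing in λ, satisfies g(λ) → 0 as λ → 0⁺ and g(λ) → k as λ → ∞; hence there is a unique λ > 0 with g(λ) = m. -/
open Finset Filter

/-- the mean of the truncated geometric distribution on {0,…,k},
g(λ) = (∑ i·λ^i)/(∑ λ^i), is strictly increasing on (0,∞), tends to 0 at 0⁺ and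
to k at ∞; hence there is a unique λ > 0 with g(λ) = m for 0 < m < k. -/
theorem stmt_2 (k : ℕ) (hk : 1 ≤ k) (m : ℝ) (hm : 0 < m) (hmk : m < k) :
    StrictMonoOn
      (fun lam : ℝ => (∑ i ∈ range (k + 1), (i : ℝ) * lam ^ i) /
        (∑ i ∈ range (k + 1), lam ^ i)) (Set.Ioi 0) ∧
    Tendsto
      (fun lam : ℝ => (∑ i ∈ range (k + 1), (i : ℝ) * lam ^ i) /
        (∑ i ∈ range (k + 1), lam ^ i))
      (nhdsWithin 0 (Set.Ioi 0)) (nhds 0) ∧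
    Tendsto
      (fun lam : ℝ => (∑ i ∈ range (k + 1), (i : ℝ) * lam ^ i) /
        (∑ i ∈ range (k + 1), lam ^ i))
      atTop (nhds k) ∧
    (∃! lam : ℝ, lam ∈ Set.Ioi (0 : ℝ) ∧
      (∑ i ∈ range (k + 1), (i : ℝ) * lam ^ i) /
        (∑ i ∈ range (k + 1), lam ^ i) = m) := by
  set g : ℝ → ℝ := fun lam : ℝ => (∑ i ∈ range (k + 1), (i : ℝ) * lam ^ i) /
        (∑ i ∈ range (k + 1), lam ^ i) with hg
  have hDpos : ∀ x : ℝ, 0 < x → 0 < ∑ i ∈ range (k + 1), x ^ i := fun x hx =>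
    Finset.sum_pos (fun i _ => pow_pos hx i) (nonempty_range_iff.mpr (Nat.succ_ne_zero k))
  -- key cross-multiplication inequality
  have key : ∀ a b : ℝ, 0 < a → a < b →
      (∑ i ∈ range (k + 1), (i : ℝ) * a ^ i) * (∑ i ∈ range (k + 1), b ^ i) <
      (∑ i ∈ range (k + 1), (i : ℝ) * b ^ i) * (∑ i ∈ range (k + 1), a ^ i) := by
    intro a b ha hab
    have hb : 0 < b := ha.trans hab
    have term_nonneg : ∀ i j : ℕ, 0 ≤ ((i : ℝ) - j) * (a ^ j * b ^ i - a ^ i * b ^ j) := by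
      intro i j
      rcases le_total j i with h | h
      · apply mul_nonneg
        · simp [Nat.cast_le.mpr h, sub_nonneg]
        · have h1 : a ^ i = a ^ j * a ^ (i - j) := by rw [← pow_add, Nat.add_sub_cancel' h]
          have h2 : b ^ i = b ^ j * b ^ (i - j) := by rw [← pow_add, Nat.add_sub_cancel' h]
          have h3 : a ^ (i - j) ≤ b ^ (i - j) := pow_le_pow_left₀ ha.le hab.le _
          rw [h1, h2]
          nlinarith [mul_nonneg (mul_nonneg (pow_pos ha j).le (pow_pos hb j).le)
            (sub_nonneg.mpr h3)]
      · have hx : ((i : ℝ) - j) ≤ 0 := by simp [Nat.cast_le.mpr h, sub_nonpos]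
        have h1 : a ^ j = a ^ i * a ^ (j - i) := by rw [← pow_add, Nat.add_sub_cancel' h]
        have h2 : b ^ j = b ^ i * b ^ (j - i) := by rw [← pow_add, Nat.add_sub_cancel' h]
        have h3 : a ^ (j - i) ≤ b ^ (j - i) := pow_le_pow_left₀ ha.le hab.le _
        have hy : a ^ j * b ^ i - a ^ i * b ^ j ≤ 0 := by
          rw [h1, h2]
          nlinarith [mul_nonneg (mul_nonneg (pow_pos ha i).le (pow_pos hb i).le)
            (sub_nonneg.mpr h3)]
        nlinarith [mul_nonneg (neg_nonneg.mpr hx) (neg_nonneg.mpr hy)]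
    rw [← sub_pos, Finset.sum_mul_sum, Finset.sum_mul_sum]
    simp only [← Finset.sum_sub_distrib]
    have hcomm : ∑ i ∈ range (k+1), ∑ j ∈ range (k+1),
        ((j:ℝ) * (a ^ i * b ^ j - a ^ j * b ^ i))
        = ∑ i ∈ range (k+1), ∑ j ∈ range (k+1),
        ((i:ℝ) * (a ^ j * b ^ i - a ^ i * b ^ j)) := Finset.sum_comm
    have e1 : ∑ i ∈ range (k+1), ∑ j ∈ range (k+1),
        ((i:ℝ) * b ^ i * a ^ j - (i:ℝ) * a ^ i * b ^ j)
        = ∑ i ∈ range (k+1), ∑ j ∈ range (k+1),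
          ((i:ℝ) * (a ^ j * b ^ i - a ^ i * b ^ j)) := by
      refine Finset.sum_congr rfl fun i _ => Finset.sum_congr rfl fun j _ => by ring
    have e2 : 2 * (∑ i ∈ range (k+1), ∑ j ∈ range (k+1),
        ((i:ℝ) * (a ^ j * b ^ i - a ^ i * b ^ j)))
        = ∑ i ∈ range (k+1), ∑ j ∈ range (k+1),
          (((i:ℝ) - j) * (a ^ j * b ^ i - a ^ i * b ^ j)) := by
      rw [two_mul]
      nth_rewrite 2 [← hcomm]
      simp only [← Finset.sum_add_distrib]
      refine Finset.sum_congr rfl fun i _ => Finset.sum_congr rfl fun j _ => by ring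
    have hTpos : 0 < ∑ i ∈ range (k+1), ∑ j ∈ range (k+1),
        (((i:ℝ) - j) * (a ^ j * b ^ i - a ^ i * b ^ j)) := by
      refine Finset.sum_pos' (fun i _ => Finset.sum_nonneg fun j _ => term_nonneg i j) ?_
      refine ⟨1, mem_range.mpr (by omega), ?_⟩
      refine Finset.sum_pos' (fun j _ => term_nonneg 1 j) ⟨0, mem_range.mpr (by omega), ?_⟩
      simp
      linarith
    rw [e1]
    linarith [e2 ▸ hTpos]
  -- strict monotonicity
  have hmono : StrictMonoOn g (Set.Ioi 0) := by
    intro a ha b hb hab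
    simp only [Set.mem_Ioi] at ha hb
    simp only [hg]
    rw [div_lt_div_iff₀ (hDpos a ha) (hDpos b hb)]
    exact key a b ha hab
  -- limit at 0⁺
  have h0 : Tendsto g (nhdsWithin 0 (Set.Ioi 0)) (nhds 0) := by
    have hNc : Continuous fun lam : ℝ => ∑ i ∈ range (k + 1), (i : ℝ) * lam ^ i :=
      continuous_finset_sum _ fun i _ => continuous_const.mul (continuous_pow i)
    have hDc : Continuous fun lam : ℝ => ∑ i ∈ range (k + 1), lam ^ i :=
      continuous_finset_sum _ fun i _ => continuous_pow i
    have hN0 : (∑ i ∈ range (k + 1), (i : ℝ) * (0:ℝ) ^ i) = 0 :=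
      Finset.sum_eq_zero fun i _ => by
        rcases Nat.eq_zero_or_pos i with h | h
        · simp [h]
        · simp [zero_pow (by omega : i ≠ 0)]
    have hD0 : (∑ i ∈ range (k + 1), (0:ℝ) ^ i) = 1 := by
      rw [Finset.sum_eq_single_of_mem 0 (mem_range.mpr (Nat.succ_pos k))
        (fun i _ hi => zero_pow hi), pow_zero]
    have h1 := ((hNc.tendsto 0).div (hDc.tendsto 0) (by rw [hD0]; norm_num))
    rw [hN0, hD0] at h1
    simp only [div_one] at h1
    exact h1.mono_left nhdsWithin_le_nhds
  -- limit at ∞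
  have htop : Tendsto g atTop (nhds k) := by
    have hFn : Continuous fun t : ℝ => ∑ i ∈ range (k + 1), (i : ℝ) * t ^ (k - i) :=
      continuous_finset_sum _ fun i _ => continuous_const.mul (continuous_pow _)
    have hFd : Continuous fun t : ℝ => ∑ i ∈ range (k + 1), t ^ (k - i) :=
      continuous_finset_sum _ fun i _ => continuous_pow _
    have hFn0 : (∑ i ∈ range (k + 1), (i : ℝ) * (0:ℝ) ^ (k - i)) = k := by
      rw [Finset.sum_eq_single_of_mem k (mem_range.mpr (Nat.lt_succ_self k))
        (fun i hi hik => by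
          rw [zero_pow (by rw [mem_range] at hi; omega), mul_zero])]
      simp
    have hFd0 : (∑ i ∈ range (k + 1), (0:ℝ) ^ (k - i)) = 1 := by
      rw [Finset.sum_eq_single_of_mem k (mem_range.mpr (Nat.lt_succ_self k))
        (fun i hi hik => zero_pow (by rw [mem_range] at hi; omega))]
      simp
    have hF : Tendsto (fun lam : ℝ =>
        (∑ i ∈ range (k + 1), (i : ℝ) * (lam⁻¹) ^ (k - i)) /
          (∑ i ∈ range (k + 1), (lam⁻¹) ^ (k - i))) atTop (nhds k) := by
      have h1 := (hFn.tendsto 0).div (hFd.tendsto 0) (by rw [hFd0]; norm_num)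
      rw [hFn0, hFd0, div_one] at h1
      exact h1.comp tendsto_inv_atTop_zero
    refine Tendsto.congr' ?_ hF
    filter_upwards [eventually_gt_atTop (0:ℝ)] with lam hlam
    have hl0 : lam ≠ 0 := hlam.ne'
    have hp : ∀ i ∈ range (k + 1), (lam⁻¹) ^ (k - i) = lam ^ i * (lam⁻¹) ^ k := by
      intro i hi
      rw [mem_range] at hi
      have hik : i ≤ k := by omega
      have e : (lam⁻¹) ^ k = (lam⁻¹) ^ (k - i) * (lam⁻¹) ^ i := by
        rw [← pow_add, Nat.sub_add_cancel hik]
      rw [e]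
      have e2 : lam ^ i * ((lam⁻¹) ^ (k - i) * (lam⁻¹) ^ i)
          = (lam⁻¹) ^ (k - i) * (lam * lam⁻¹) ^ i := by ring
      rw [e2, mul_inv_cancel₀ hl0, one_pow, mul_one]
    have hnum : ∑ i ∈ range (k + 1), (i : ℝ) * (lam⁻¹) ^ (k - i)
        = (∑ i ∈ range (k + 1), (i : ℝ) * lam ^ i) * (lam⁻¹) ^ k := by
      rw [Finset.sum_mul]
      exact Finset.sum_congr rfl fun i hi => by rw [hp i hi]; ring
    have hden : ∑ i ∈ range (k + 1), (lam⁻¹) ^ (k - i)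
        = (∑ i ∈ range (k + 1), lam ^ i) * (lam⁻¹) ^ k := by
      rw [Finset.sum_mul]
      exact Finset.sum_congr rfl fun i hi => hp i hi
    rw [hnum, hden, mul_div_mul_right _ _ (pow_ne_zero _ (inv_ne_zero hl0))]
  refine ⟨hmono, h0, htop, ?_⟩
  -- existence via IVT
  have hev0 : ∀ᶠ x in nhdsWithin 0 (Set.Ioi 0), g x < m :=
    h0.eventually (eventually_lt_nhds hm)
  obtain ⟨a, hgam, ha0⟩ := (hev0.and self_mem_nhdsWithin).exists
  have hevtop : ∀ᶠ x in atTop, m < g x :=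
    htop.eventually (eventually_gt_nhds hmk)
  obtain ⟨b, hbm, hab⟩ := (hevtop.and (eventually_gt_atTop a)).exists
  have ha0' : (0:ℝ) < a := ha0
  have hb0 : (0:ℝ) < b := ha0'.trans hab
  have hgcont : ContinuousOn g (Set.Icc a b) := by
    apply ContinuousOn.div
    · exact (continuous_finset_sum _ fun i _ =>
        continuous_const.mul (continuous_pow i)).continuousOn
    · exact (continuous_finset_sum _ fun i _ => continuous_pow i).continuousOn
    · intro x hx
      exact (hDpos x (ha0'.trans_le hx.1)).ne'
  have hmem : m ∈ Set.Icc (g a) (g b) := ⟨hgam.le, hbm.le⟩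
  obtain ⟨lam, hlam, hglam⟩ := intermediate_value_Icc hab.le hgcont hmem
  have hlam0 : lam ∈ Set.Ioi (0:ℝ) := ha0'.trans_le hlam.1
  refine ⟨lam, ⟨hlam0, hglam⟩, ?_⟩
  intro y ⟨hy0, hgy⟩
  exact hmono.injOn hy0 hlam0 (by show g y = g lam; rw [hglam]; exact hgy)
end

section
/- Suppose M is a distribution of money on {0,…,K} arising from an explanation π with parameter λ > 0, i.e. M_i = B_i λ^i where B_i = ∑_{k≥i} π_k / ∑_{j=0}^k λ^j. If π has support of size s and the largest element of its support is K, then at least K − s of the ratios M_i / M_{i−1} for 1 ≤ i ≤ K equal λ; specifically, whenever π_{i−1} = 0 (and M_{i-1} > 0), we have M_i / M_{i−1} = λ. -/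
open Finset

/-- if M is the money distribution induced by an explanation π
(supported in {0,…,K}, with π_K > 0) with parameter λ, then M_i / M_{i−1} = λ
whenever π_{i−1} = 0 (and M_{i−1} > 0); hence at least K − s of the ratios
M_i/M_{i−1}, 1 ≤ i ≤ K, equal λ, where s is the size of the support of π. -/
theorem stmt_10 (K : ℕ) (π : ℕ → ℝ) (lam : ℝ) (hlam : 0 < lam)
    (hπ : ∀ k, 0 ≤ π k) (hπsupp : ∀ k, K < k → π k = 0)
    (hπsum : ∑ k ∈ range (K + 1), π k = 1) (hπK : 0 < π K)
    (M : ℕ → ℝ)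
    (hM : ∀ i ≤ K, M i = ∑ k ∈ Finset.Icc i K,
      π k * lam ^ i / ∑ j ∈ range (k + 1), lam ^ j) :
    (∀ i, 1 ≤ i → i ≤ K → π (i - 1) = 0 → 0 < M (i - 1) →
      M i / M (i - 1) = lam) ∧
    K - ((range (K + 1)).filter (fun k => π k ≠ 0)).card ≤
      ((Finset.Icc 1 K).filter (fun i => M i / M (i - 1) = lam)).card := by
  have hD : ∀ k : ℕ, 0 < ∑ j ∈ range (k + 1), lam ^ j := by
    intro k
    apply Finset.sum_pos
    · intro j _; positivity
    · exact nonempty_range_add_one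
  have hMpos : ∀ j, j ≤ K → 0 < M j := by
    intro j hj
    rw [hM j hj]
    apply Finset.sum_pos'
    · intro k _
      have := hD k
      have := hπ k
      positivity
    · refine ⟨K, Finset.mem_Icc.mpr ⟨hj, le_refl K⟩, ?_⟩
      have := hD K
      positivity
  have key : ∀ i, 1 ≤ i → i ≤ K → π (i - 1) = 0 → M i = lam * M (i - 1) := by
    intro i h1 hK hz
    rw [hM i hK, hM (i - 1) (le_trans (Nat.sub_le i 1) hK)]
    have hi : i - 1 + 1 = i := Nat.succ_pred_eq_of_pos h1
    have hicc : Finset.Icc (i - 1) K = insert (i - 1) (Finset.Icc i K) := by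
      ext x
      simp only [Finset.mem_Icc, Finset.mem_insert]
      omega
    rw [hicc, Finset.sum_insert (by simp [Finset.mem_Icc]; omega), hz]
    simp only [zero_mul, zero_div, zero_add]
    rw [Finset.mul_sum]
    apply Finset.sum_congr rfl
    intro k hk
    have hpow : lam ^ i = lam * lam ^ (i - 1) := by
      rw [← hi, pow_succ]; exact mul_comm _ _
    rw [hpow]; ring
  have part1 : ∀ i, 1 ≤ i → i ≤ K → π (i - 1) = 0 → 0 < M (i - 1) →
      M i / M (i - 1) = lam := by
    intro i h1 hK hz hpos
    rw [key i h1 hK hz, mul_div_assoc, div_self (ne_of_gt hpos), mul_one]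
  refine ⟨part1, ?_⟩
  have hsub : (Finset.Icc 1 K).filter (fun i => π (i - 1) = 0) ⊆
      (Finset.Icc 1 K).filter (fun i => M i / M (i - 1) = lam) := by
    intro i hi
    simp only [Finset.mem_filter, Finset.mem_Icc] at hi ⊢
    exact ⟨hi.1, part1 i hi.1.1 hi.1.2 hi.2 (hMpos _ (by omega))⟩
  have hcardT : ((Finset.Icc 1 K).filter (fun i => π (i - 1) = 0)).card
      = ((range K).filter (fun k => π k = 0)).card := by
    apply Finset.card_bij (fun i _ => i - 1)
    · intro i hi
      simp only [Finset.mem_filter, Finset.mem_Icc] at hi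
      simp only [Finset.mem_filter, Finset.mem_range]
      exact ⟨by omega, hi.2⟩
    · intro i hi j hj h
      simp only [Finset.mem_filter, Finset.mem_Icc] at hi hj
      omega
    · intro k hk
      simp only [Finset.mem_filter, Finset.mem_range] at hk
      refine ⟨k + 1, ?_, by omega⟩
      simp only [Finset.mem_filter, Finset.mem_Icc]
      exact ⟨⟨by omega, by omega⟩, by simpa using hk.2⟩
  have hsplit : ((range K).filter (fun k => π k = 0)).card
      + ((range K).filter (fun k => ¬ π k = 0)).card = K := by
    rw [Finset.card_filter_add_card_filter_not, Finset.card_range]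
  have hmono : ((range K).filter (fun k => ¬ π k = 0)).card
      ≤ ((range (K + 1)).filter (fun k => π k ≠ 0)).card := by
    apply Finset.card_le_card
    apply Finset.filter_subset_filter
    exact Finset.range_subset_range.mpr (Nat.le_succ K)
  have hle := Finset.card_le_card hsub
  omega
end

section
/- Under the hypotheses of the previous statement, any other explanation π' of M (with a necessarily different parameter λ' ≠ λ) must have support of size at least K − s, where s is the size of the support of π and K is its maximum element. -/
open Finset

lemma aux_step (K k : ℕ) (π : ℕ → ℝ) (lam : ℝ) (hlam : 0 < lam)
    (M : ℕ → ℝ)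
    (hM : ∀ i ≤ K, M i = ∑ k ∈ Finset.Icc i K,
      π k * lam ^ i / ∑ j ∈ range (k + 1), lam ^ j)
    (hk : k < K) (h0 : π k = 0) :
    M (k + 1) = lam * M k := by
  rw [hM (k + 1) hk, hM k hk.le]
  have hins : insert k (Finset.Icc (k + 1) K) = Finset.Icc k K := by
    rw [Finset.Icc_add_one_left_eq_Ioc]
    exact Finset.Ioc_insert_left hk.le
  rw [← hins, Finset.sum_insert (by simp [Finset.Icc_add_one_left_eq_Ioc]), h0]
  simp only [zero_mul, zero_div, zero_add]
  rw [Finset.mul_sum]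
  refine Finset.sum_congr rfl fun j hj => ?_
  rw [pow_succ]
  ring

lemma aux_pos (K k : ℕ) (π : ℕ → ℝ) (lam : ℝ) (hlam : 0 < lam)
    (hπ : ∀ k, 0 ≤ π k) (hπK : 0 < π K)
    (M : ℕ → ℝ)
    (hM : ∀ i ≤ K, M i = ∑ k ∈ Finset.Icc i K,
      π k * lam ^ i / ∑ j ∈ range (k + 1), lam ^ j)
    (hk : k ≤ K) : 0 < M k := by
  rw [hM k hk]
  apply Finset.sum_pos'
  · intro j hj
    apply div_nonneg (mul_nonneg (hπ j) (pow_nonneg hlam.le k))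
    exact Finset.sum_nonneg fun _ _ => pow_nonneg hlam.le _
  · refine ⟨K, Finset.mem_Icc.2 ⟨hk, le_refl K⟩, ?_⟩
    apply div_pos (mul_pos hπK (pow_pos hlam k))
    exact Finset.sum_pos (fun _ _ => pow_pos hlam _) ⟨0, by simp⟩

/-- if M is the money distribution induced by an explanation π
(supported in {0,…,K}, π_K > 0, support size s) with parameter λ, then any
other explanation π' of M, with parameter λ' ≠ λ, has support of size at least
K − s. -/
theorem stmt_11 (K : ℕ) (π π' : ℕ → ℝ) (lam lam' : ℝ)
    (hlam : 0 < lam) (hlam' : 0 < lam') (hne : lam' ≠ lam)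
    (hπ : ∀ k, 0 ≤ π k) (hπsupp : ∀ k, K < k → π k = 0)
    (hπsum : ∑ k ∈ range (K + 1), π k = 1) (hπK : 0 < π K)
    (hπ' : ∀ k, 0 ≤ π' k) (hπ'supp : ∀ k, K < k → π' k = 0)
    (hπ'sum : ∑ k ∈ range (K + 1), π' k = 1)
    (M : ℕ → ℝ)
    (hM : ∀ i ≤ K, M i = ∑ k ∈ Finset.Icc i K,
      π k * lam ^ i / ∑ j ∈ range (k + 1), lam ^ j)
    (hM' : ∀ i ≤ K, M i = ∑ k ∈ Finset.Icc i K,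
      π' k * lam' ^ i / ∑ j ∈ range (k + 1), lam' ^ j) :
    K - ((range (K + 1)).filter (fun k => π k ≠ 0)).card ≤
      ((range (K + 1)).filter (fun k => π' k ≠ 0)).card := by
  have key : ∀ k < K, π k ≠ 0 ∨ π' k ≠ 0 := by
    intro k hk
    by_contra h
    push_neg at h
    obtain ⟨h1, h2⟩ := h
    have e1 := aux_step K k π lam hlam M hM hk h1
    have e2 := aux_step K k π' lam' hlam' M hM' hk h2
    have hpos := aux_pos K k π lam hlam hπ hπK M hM hk.le
    exact hne (mul_right_cancel₀ (ne_of_gt hpos) (e2.symm.trans e1))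
  have hsub : range K ⊆
      (range (K + 1)).filter (fun k => π k ≠ 0) ∪
      (range (K + 1)).filter (fun k => π' k ≠ 0) := by
    intro k hk
    rw [Finset.mem_range] at hk
    rcases key k hk with h | h
    · exact Finset.mem_union_left _ (Finset.mem_filter.2 ⟨Finset.mem_range.2 (by omega), h⟩)
    · exact Finset.mem_union_right _ (Finset.mem_filter.2 ⟨Finset.mem_range.2 (by omega), h⟩)
  have hcard : K ≤
      ((range (K + 1)).filter (fun k => π k ≠ 0)).card +
      ((range (K + 1)).filter (fun k => π' k ≠ 0)).card := by
    calc K = (range K).card := (Finset.card_range K).symm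
    _ ≤ _ := le_trans (Finset.card_le_card hsub) (Finset.card_union_le _ _)
  omega
end

section
/- Let π be a probability distribution over thresholds with finite support contained in {0,…,K} and with π not concentrated on 0. For λ > 0 define m(λ) = ∑_k π_k · (∑_{i=0}^k i λ^i)/(∑_{i=0}^k λ^i). Then m is continuous and strictly increasing on (0,∞), with m(λ) → 0 as λ → 0⁺ and m(λ) → ∑_k π_k k as λ → ∞. Consequently, for every m with 0 < m < ∑_k π_k k there is a unique λ > 0 achieving mean m. -/
open Finset Filter

lemma Dpos (k : ℕ) {x : ℝ} (hx : 0 < x) : 0 < ∑ i ∈ range (k+1), x^i :=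
  Finset.sum_pos (fun i _ => pow_pos hx i) nonempty_range_add_one

lemma pow_cross {a b : ℝ} (ha : 0 < a) (hab : a ≤ b) {j i : ℕ} (hji : j ≤ i) :
    a^i * b^j ≤ b^i * a^j := by
  obtain ⟨d, rfl⟩ := Nat.exists_eq_add_of_le hji
  have hb : 0 < b := ha.trans_le hab
  have h1 : a^d ≤ b^d := pow_le_pow_left₀ ha.le hab d
  have h2 : (0:ℝ) < a^j * b^j := by positivity
  rw [pow_add, pow_add]
  nlinarith

lemma term_nonneg {a b : ℝ} (ha : 0 < a) (hab : a ≤ b) (i j : ℕ) :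
    0 ≤ ((i:ℝ) - j) * (b^i * a^j - a^i * b^j) := by
  rcases le_total j i with h | h
  · have h1 := pow_cross ha hab h
    have h2 : (0:ℝ) ≤ b^i * a^j - a^i * b^j := by linarith
    have hij : (0:ℝ) ≤ (i:ℝ) - j := by
      have := Nat.cast_le (α := ℝ).2 h; linarith
    positivity
  · have h1 := pow_cross ha hab h
    have h2 : b^i * a^j - a^i * b^j ≤ 0 := by linarith
    have hij : (i:ℝ) - j ≤ 0 := by
      have := Nat.cast_le (α := ℝ).2 h; linarith
    nlinarith

lemma cross_key (k : ℕ) (a b : ℝ) :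
    2 * ((∑ i ∈ range (k+1), (i:ℝ) * b^i) * (∑ i ∈ range (k+1), a^i)
      - (∑ i ∈ range (k+1), (i:ℝ) * a^i) * (∑ i ∈ range (k+1), b^i))
    = ∑ i ∈ range (k+1), ∑ j ∈ range (k+1),
        ((i:ℝ) - j) * (b^i * a^j - a^i * b^j) := by
  have e1 : (∑ i ∈ range (k+1), ∑ j ∈ range (k+1),
        ((i:ℝ) - j) * (b^i * a^j - a^i * b^j))
      = (∑ i ∈ range (k+1), ∑ j ∈ range (k+1), (i:ℝ) * b^i * a^j)
        - (∑ i ∈ range (k+1), ∑ j ∈ range (k+1), (i:ℝ) * a^i * b^j)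
        - (∑ i ∈ range (k+1), ∑ j ∈ range (k+1), (j:ℝ) * b^i * a^j)
        + (∑ i ∈ range (k+1), ∑ j ∈ range (k+1), (j:ℝ) * a^i * b^j) := by
    rw [← Finset.sum_sub_distrib, ← Finset.sum_sub_distrib, ← Finset.sum_add_distrib]
    refine Finset.sum_congr rfl fun i _ => ?_
    rw [← Finset.sum_sub_distrib, ← Finset.sum_sub_distrib, ← Finset.sum_add_distrib]
    refine Finset.sum_congr rfl fun j _ => by ring
  have e3 : (∑ i ∈ range (k+1), ∑ j ∈ range (k+1), (j:ℝ) * b^i * a^j)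
      = ∑ i ∈ range (k+1), ∑ j ∈ range (k+1), (i:ℝ) * a^i * b^j := by
    rw [Finset.sum_comm]
    exact Finset.sum_congr rfl fun i _ => Finset.sum_congr rfl fun j _ => by ring
  have e4 : (∑ i ∈ range (k+1), ∑ j ∈ range (k+1), (j:ℝ) * a^i * b^j)
      = ∑ i ∈ range (k+1), ∑ j ∈ range (k+1), (i:ℝ) * b^i * a^j := by
    rw [Finset.sum_comm]
    exact Finset.sum_congr rfl fun i _ => Finset.sum_congr rfl fun j _ => by ring
  rw [Finset.sum_mul_sum, Finset.sum_mul_sum]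
  linarith [e1, e3, e4]

lemma cross_le (k : ℕ) {a b : ℝ} (ha : 0 < a) (hab : a < b) :
    (∑ i ∈ range (k+1), (i:ℝ) * a^i) * (∑ i ∈ range (k+1), b^i)
      ≤ (∑ i ∈ range (k+1), (i:ℝ) * b^i) * (∑ i ∈ range (k+1), a^i) := by
  have h := cross_key k a b
  have hnn : 0 ≤ ∑ i ∈ range (k+1), ∑ j ∈ range (k+1),
      ((i:ℝ) - j) * (b^i * a^j - a^i * b^j) :=
    Finset.sum_nonneg fun i _ => Finset.sum_nonneg fun j _ => term_nonneg ha hab.le i j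
  linarith

lemma cross_lt (k : ℕ) (hk : 1 ≤ k) {a b : ℝ} (ha : 0 < a) (hab : a < b) :
    (∑ i ∈ range (k+1), (i:ℝ) * a^i) * (∑ i ∈ range (k+1), b^i)
      < (∑ i ∈ range (k+1), (i:ℝ) * b^i) * (∑ i ∈ range (k+1), a^i) := by
  have h := cross_key k a b
  have hpos : 0 < ∑ i ∈ range (k+1), ∑ j ∈ range (k+1),
      ((i:ℝ) - j) * (b^i * a^j - a^i * b^j) := by
    refine Finset.sum_pos' (fun i _ => Finset.sum_nonneg fun j _ => term_nonneg ha hab.le i j)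
      ⟨1, Finset.mem_range.2 (by omega), ?_⟩
    refine Finset.sum_pos' (fun j _ => term_nonneg ha hab.le 1 j)
      ⟨0, Finset.mem_range.2 (by omega), ?_⟩
    simp only [Nat.cast_one, Nat.cast_zero, pow_one, pow_zero]
    nlinarith
  linarith

lemma fk_le (k : ℕ) {a b : ℝ} (ha : 0 < a) (hab : a < b) :
    (∑ i ∈ range (k+1), (i:ℝ) * a^i) / (∑ i ∈ range (k+1), a^i)
      ≤ (∑ i ∈ range (k+1), (i:ℝ) * b^i) / (∑ i ∈ range (k+1), b^i) := by
  rw [div_le_div_iff₀ (Dpos k ha) (Dpos k (ha.trans hab))]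
  exact cross_le k ha hab

lemma fk_lt (k : ℕ) (hk : 1 ≤ k) {a b : ℝ} (ha : 0 < a) (hab : a < b) :
    (∑ i ∈ range (k+1), (i:ℝ) * a^i) / (∑ i ∈ range (k+1), a^i)
      < (∑ i ∈ range (k+1), (i:ℝ) * b^i) / (∑ i ∈ range (k+1), b^i) := by
  rw [div_lt_div_iff₀ (Dpos k ha) (Dpos k (ha.trans hab))]
  exact cross_lt k hk ha hab

lemma num_zero (k : ℕ) : ∑ i ∈ range (k+1), (i:ℝ) * (0:ℝ)^i = 0 := by
  apply Finset.sum_eq_zero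
  intro i _
  rcases Nat.eq_zero_or_pos i with h | h
  · simp [h]
  · simp [zero_pow (Nat.pos_iff_ne_zero.1 h)]

lemma den_zero (k : ℕ) : ∑ i ∈ range (k+1), (0:ℝ)^i = 1 := by
  rw [Finset.sum_eq_single 0]
  · simp
  · intro b _ hb; simp [zero_pow hb]
  · simp

lemma num_reflect (k : ℕ) {x : ℝ} (hx : 0 < x) :
    ∑ i ∈ range (k+1), (i:ℝ) * x^i
      = x^k * ∑ j ∈ range (k+1), ((k-j : ℕ):ℝ) * (x⁻¹)^j := by
  rw [Finset.mul_sum]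
  rw [← Finset.sum_range_reflect (fun i => (i:ℝ) * x^i) (k+1)]
  refine Finset.sum_congr rfl fun j hj => ?_
  have hjk : j ≤ k := Nat.lt_succ_iff.1 (Finset.mem_range.1 hj)
  have h1 : k + 1 - 1 - j = k - j := by omega
  have hxj : (x:ℝ)^j ≠ 0 := (pow_pos hx j).ne'
  have h2 : x ^ (k - j) * x ^ j = x ^ k := by rw [← pow_add]; congr 1; omega
  rw [h1, inv_pow, mul_comm (x^k), mul_assoc]
  congr 1
  rw [← h2, mul_comm (x^(k-j)), ← mul_assoc, inv_mul_cancel₀ hxj, one_mul]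


lemma den_reflect (k : ℕ) {x : ℝ} (hx : 0 < x) :
    ∑ i ∈ range (k+1), x^i = x^k * ∑ j ∈ range (k+1), (x⁻¹)^j := by
  rw [Finset.mul_sum]
  rw [← Finset.sum_range_reflect (fun i => x^i) (k+1)]
  refine Finset.sum_congr rfl fun j hj => ?_
  have hjk : j ≤ k := Nat.lt_succ_iff.1 (Finset.mem_range.1 hj)
  have h1 : k + 1 - 1 - j = k - j := by omega
  have hxj : (x:ℝ)^j ≠ 0 := (pow_pos hx j).ne'
  have h2 : x ^ (k - j) * x ^ j = x ^ k := by rw [← pow_add]; congr 1; omega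
  rw [h1, inv_pow, mul_comm (x^k)]
  rw [← h2, mul_comm (x^(k-j)), ← mul_assoc, inv_mul_cancel₀ hxj, one_mul]

lemma fk_eq_g (k : ℕ) {x : ℝ} (hx : 0 < x) :
    (∑ i ∈ range (k+1), (i:ℝ) * x^i) / (∑ i ∈ range (k+1), x^i)
      = (∑ j ∈ range (k+1), ((k-j : ℕ):ℝ) * (x⁻¹)^j)
        / (∑ j ∈ range (k+1), (x⁻¹)^j) := by
  rw [num_reflect k hx, den_reflect k hx,
    mul_div_mul_left _ _ (pow_pos hx k).ne']

lemma g_tendsto (k : ℕ) :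
    Tendsto (fun x : ℝ => (∑ i ∈ range (k+1), (i:ℝ) * x^i)
      / (∑ i ∈ range (k+1), x^i)) atTop (nhds (k:ℝ)) := by
  have hcontN : Continuous fun μ : ℝ => ∑ j ∈ range (k+1), ((k-j : ℕ):ℝ) * μ^j :=
    continuous_finset_sum _ fun j _ => continuous_const.mul (continuous_pow j)
  have hcontD : Continuous fun μ : ℝ => ∑ j ∈ range (k+1), μ^j :=
    continuous_finset_sum _ fun j _ => continuous_pow j
  have hD0 : (∑ j ∈ range (k+1), (0:ℝ)^j) = 1 := den_zero k
  have hN0 : (∑ j ∈ range (k+1), ((k-j : ℕ):ℝ) * (0:ℝ)^j) = (k:ℝ) := by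
    rw [Finset.sum_eq_single 0]
    · simp
    · intro b _ hb; simp [zero_pow hb]
    · simp
  have hcont : ContinuousAt (fun μ : ℝ =>
      (∑ j ∈ range (k+1), ((k-j : ℕ):ℝ) * μ^j) / (∑ j ∈ range (k+1), μ^j)) 0 :=
    ContinuousAt.div hcontN.continuousAt hcontD.continuousAt (by rw [hD0]; norm_num)
  have hlim := hcont.tendsto.comp tendsto_inv_atTop_zero
  rw [hN0, hD0] at hlim
  simp only [div_one] at hlim
  refine hlim.congr' ?_
  filter_upwards [eventually_gt_atTop (0:ℝ)] with x hx
  exact (fk_eq_g k hx).symm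

/-- for a threshold distribution π supported in {0,…,K} and not
concentrated on 0, the mean money m(λ) = ∑_k π_k (∑ i λ^i)/(∑ λ^i) is
continuous and strictly increasing on (0,∞), tends to 0 at 0⁺ and to ∑ π_k·k at
∞; hence every mean in (0, ∑ π_k·k) is achieved by a unique λ > 0. -/
theorem stmt_16 (K : ℕ) (π : ℕ → ℝ) (hπ : ∀ k, 0 ≤ π k)
    (hπsupp : ∀ k, K < k → π k = 0)
    (hπsum : ∑ k ∈ range (K + 1), π k = 1)
    (hnotdirac : π 0 < 1) :
    ContinuousOn
      (fun lam : ℝ => ∑ k ∈ range (K + 1), π k *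
        ((∑ i ∈ range (k + 1), (i : ℝ) * lam ^ i) /
          (∑ i ∈ range (k + 1), lam ^ i))) (Set.Ioi 0) ∧
    StrictMonoOn
      (fun lam : ℝ => ∑ k ∈ range (K + 1), π k *
        ((∑ i ∈ range (k + 1), (i : ℝ) * lam ^ i) /
          (∑ i ∈ range (k + 1), lam ^ i))) (Set.Ioi 0) ∧
    Tendsto
      (fun lam : ℝ => ∑ k ∈ range (K + 1), π k *
        ((∑ i ∈ range (k + 1), (i : ℝ) * lam ^ i) /
          (∑ i ∈ range (k + 1), lam ^ i)))
      (nhdsWithin 0 (Set.Ioi 0)) (nhds 0) ∧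
    Tendsto
      (fun lam : ℝ => ∑ k ∈ range (K + 1), π k *
        ((∑ i ∈ range (k + 1), (i : ℝ) * lam ^ i) /
          (∑ i ∈ range (k + 1), lam ^ i)))
      atTop (nhds (∑ k ∈ range (K + 1), π k * k)) ∧
    ∀ m : ℝ, 0 < m → m < ∑ k ∈ range (K + 1), π k * k →
      ∃! lam : ℝ, lam ∈ Set.Ioi (0 : ℝ) ∧
        ∑ k ∈ range (K + 1), π k *
          ((∑ i ∈ range (k + 1), (i : ℝ) * lam ^ i) /
            (∑ i ∈ range (k + 1), lam ^ i)) = m := by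
  set F : ℝ → ℝ := fun lam => ∑ k ∈ range (K + 1), π k *
        ((∑ i ∈ range (k + 1), (i : ℝ) * lam ^ i) /
          (∑ i ∈ range (k + 1), lam ^ i)) with hF
  -- continuity
  have hcont : ContinuousOn F (Set.Ioi 0) := by
    apply continuousOn_finset_sum
    intro k _
    apply ContinuousOn.mul continuousOn_const
    apply ContinuousOn.div
    · exact (continuous_finset_sum _ fun i _ =>
        continuous_const.mul (continuous_pow i)).continuousOn
    · exact (continuous_finset_sum _ fun i _ => (continuous_pow i)).continuousOn
    · exact fun x hx => (Dpos k hx).ne'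
  -- strict monotonicity
  have hk0 : ∃ k ∈ range (K + 1), 1 ≤ k ∧ 0 < π k := by
    by_contra h
    push_neg at h
    have hsum : ∑ k ∈ range (K + 1), π k = π 0 := by
      apply Finset.sum_eq_single_of_mem 0 (Finset.mem_range.2 (by omega))
      intro b hb hb0
      exact le_antisymm (h b hb (Nat.one_le_iff_ne_zero.2 hb0)) (hπ b)
    linarith
  have hmono : StrictMonoOn F (Set.Ioi 0) := by
    intro a ha b hb hab
    obtain ⟨k0, hk0mem, hk01, hk0pos⟩ := hk0
    apply Finset.sum_lt_sum
    · exact fun k _ => mul_le_mul_of_nonneg_left (fk_le k ha hab) (hπ k)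
    · exact ⟨k0, hk0mem, mul_lt_mul_of_pos_left (fk_lt k0 hk01 ha hab) hk0pos⟩
  -- limit at 0⁺
  have hlim0 : Tendsto F (nhdsWithin 0 (Set.Ioi 0)) (nhds 0) := by
    have h : Tendsto F (nhds 0) (nhds (∑ k ∈ range (K + 1), (0:ℝ))) := by
      apply tendsto_finset_sum
      intro k _
      have hc : ContinuousAt (fun lam : ℝ => π k *
          ((∑ i ∈ range (k + 1), (i : ℝ) * lam ^ i) /
            (∑ i ∈ range (k + 1), lam ^ i))) 0 := by
        apply ContinuousAt.mul continuousAt_const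
        apply ContinuousAt.div
        · exact (continuous_finset_sum _ fun i _ =>
            continuous_const.mul (continuous_pow i)).continuousAt
        · exact (continuous_finset_sum _ fun i _ => (continuous_pow i)).continuousAt
        · rw [den_zero k]; norm_num
      have := hc.tendsto
      rwa [num_zero k, den_zero k, div_one, mul_zero] at this
    rw [Finset.sum_const_zero] at h
    exact h.mono_left nhdsWithin_le_nhds
  -- limit at ∞
  have hlimtop : Tendsto F atTop (nhds (∑ k ∈ range (K + 1), π k * k)) := by
    apply tendsto_finset_sum
    intro k _
    exact (tendsto_const_nhds.mul (g_tendsto k))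
  refine ⟨hcont, hmono, hlim0, hlimtop, ?_⟩
  intro m hm hmM
  -- find a with F a < m
  have hev0 : ∀ᶠ lam in nhdsWithin 0 (Set.Ioi 0), F lam < m ∧ lam ∈ Set.Ioi (0:ℝ) :=
    (hlim0.eventually (Filter.Tendsto.eventually_lt_const hm tendsto_id)).and self_mem_nhdsWithin
  obtain ⟨a, hFa, ha⟩ := hev0.exists
  -- find b > a with m < F b
  have hevtop : ∀ᶠ lam in atTop, m < F lam ∧ a < lam :=
    (hlimtop.eventually (Filter.Tendsto.eventually_const_lt hmM tendsto_id)).and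
      (eventually_gt_atTop a)
  obtain ⟨b, hFb, hab⟩ := hevtop.exists
  have hsub : Set.Icc a b ⊆ Set.Ioi 0 := fun x hx => lt_of_lt_of_le ha hx.1
  have hivt := intermediate_value_Icc hab.le (hcont.mono hsub)
  obtain ⟨lam, hlammem, hFlam⟩ := hivt ⟨hFa.le, hFb.le⟩
  have hlampos : lam ∈ Set.Ioi (0:ℝ) := hsub hlammem
  refine ⟨lam, ⟨hlampos, hFlam⟩, ?_⟩
  intro y hy
  exact hmono.injOn hy.1 hlampos (hy.2.trans hFlam.symm)
end
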